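/- Suppose (I,<) forms a set of tight indiscernibles generating M* over M. For each S ⊆ I let M_S be the elementary submodel of M* generated by M ∪ S. Then M_{S₀} ≼ M_{S₁} whenever S₀ ⊆ S₁ ⊆ I, and if S₀ and S₁ are disjoint subsets of I then M_{S₀} ∩ M_{S₁} = M. -/

import Mathlib

open FirstOrder Language

/-- `f : N^k → N` is parametrically definable (over the parameter set `A`). -/
def ParamDefFun (L : Language) {N : Type*} [L.Structure N] (A : Set N) (k : ℕ)
    (f : (Fin k → N) → N) : Prop :=
  Set.Definable A L {x : Fin (k + 1) → N | x (Fin.last k) = f (fun i => x i.castSucc)}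

/-- `(ι,<)`, presented by `e : ι → N`, is a set of order indiscernibles over the
parameter set `A`: any two increasing tuples satisfy the same formulas with
parameters from `A`. -/
def OrderIndisc (L : Language) {N : Type*} [L.Structure N] (A : Set N)
    {ι : Type*} [LinearOrder ι] (e : ι → N) : Prop :=
  ∀ (k : ℕ) (φ : (L[[↥A]]).Formula (Fin k)) (i j : Fin k → ι),
    StrictMono i → StrictMono j → (φ.Realize (e ∘ i) ↔ φ.Realize (e ∘ j))

/-- Property (2) of tight indiscernibles: `N` is generated over `A` by the image of `e`,
via parametrically `A`-definable functions applied to increasing tuples. -/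
def GeneratedBy (L : Language) {N : Type*} [L.Structure N] (A : Set N)
    {ι : Type*} [LinearOrder ι] (e : ι → N) : Prop :=
  ∀ a : N, ∃ (k : ℕ) (f : (Fin k → N) → N), ParamDefFun L A k f ∧
    ∃ i : Fin k → ι, StrictMono i ∧ f (e ∘ i) = a

/-- Property (3) of tight indiscernibles: if a parametrically `A`-definable function takes
the same value at two increasing tuples, the second lying entirely above the first, then
that common value lies in `A`. -/
def TightProp (L : Language) {N : Type*} [L.Structure N] (A : Set N)
    {ι : Type*} [LinearOrder ι] (e : ι → N) : Prop :=
  ∀ (k : ℕ) (f : (Fin k → N) → N), ParamDefFun L A k f →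
    ∀ i j : Fin k → ι, StrictMono i → StrictMono j → (∀ a b, i a < j b) →
      f (e ∘ i) = f (e ∘ j) → f (e ∘ i) ∈ A

/-- `A` has definable Skolem functions (realized in `N`). -/
def HasDefSkolem (L : Language) {N : Type*} [L.Structure N] (A : Set N) : Prop :=
  ∀ (n : ℕ) (φ : (L[[↥A]]).Formula (Fin (n + 1))), ∃ f : (Fin n → N) → N,
    ParamDefFun L A n f ∧
      ∀ x : Fin n → N, (∃ b, φ.Realize (Fin.snoc x b)) → φ.Realize (Fin.snoc x (f x))


/-- The submodel of `N` generated by `A` together with `{e i : i ∈ T}`: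
all values of parametrically `A`-definable functions at increasing tuples from `T`,
together with `A`. -/
def genSet (L : Language) {N : Type*} [L.Structure N] (A : Set N)
    {ι : Type*} [LinearOrder ι] (e : ι → N) (T : Set ι) : Set N :=
  A ∪ {a | ∃ (k : ℕ) (f : (Fin k → N) → N), ParamDefFun L A k f ∧
    ∃ i : Fin k → ι, StrictMono i ∧ (∀ t, i t ∈ T) ∧ f (e ∘ i) = a}

section Aux

variable {L : Language} {N : Type*} [L.Structure N] {A : Set N}
  {ι : Type*} [LinearOrder ι]

lemma pdf_proj (n : ℕ) (j : Fin n) : ParamDefFun L A n (fun y => y j) := by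
  refine ⟨Term.equal (Term.var (Fin.last n)) (Term.var j.castSucc), ?_⟩
  ext x
  simp [Formula.realize_equal]

lemma pdf_const {c : N} (hc : c ∈ A) (n : ℕ) : ParamDefFun L A n (fun _ => c) := by
  refine ⟨Term.equal (Term.var (Fin.last n)) ((L.con (⟨c, hc⟩ : A)).term), ?_⟩
  ext x
  simp [Formula.realize_equal, Term.realize_con]

lemma pdf_reindex {k n : ℕ} {f : (Fin k → N) → N} (hf : ParamDefFun L A k f)
    (p : Fin k → Fin n) : ParamDefFun L A n (fun y => f (y ∘ p)) := by
  have h := Set.Definable.preimage_comp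
    (Fin.snoc (fun r => (p r).castSucc) (Fin.last n) : Fin (k + 1) → Fin (n + 1)) hf
  have heq : ((fun x : Fin (n+1) → N =>
        x ∘ (Fin.snoc (fun r => (p r).castSucc) (Fin.last n) : Fin (k + 1) → Fin (n + 1))) ⁻¹'
      {x : Fin (k + 1) → N | x (Fin.last k) = f fun i => x i.castSucc}) =
      {x : Fin (n + 1) → N | x (Fin.last n) = (fun y => f (y ∘ p)) fun i => x i.castSucc} := by
    ext x
    simp [Function.comp_def]
  rwa [heq] at h

lemma def_subst {γ : Type*} [Fintype γ] {n : ℕ} {s : Set (γ → N)} (hs : A.Definable L s)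
    (g : γ → (Fin n → N) → N) (hg : ∀ c, ParamDefFun L A n (g c)) :
    A.Definable L {y : Fin n → N | (fun c => g c y) ∈ s} := by
  classical
  set T : Set ((Fin n ⊕ γ) → N) :=
    ((fun w : (Fin n ⊕ γ) → N => w ∘ Sum.inr) ⁻¹' s) ∩
      ⋂ c ∈ (Finset.univ : Finset γ), ((fun w : (Fin n ⊕ γ) → N =>
        w ∘ (Fin.snoc Sum.inl (Sum.inr c) : Fin (n+1) → Fin n ⊕ γ)) ⁻¹'
        {x : Fin (n + 1) → N | x (Fin.last n) = g c fun i => x i.castSucc}) with hT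
  have hTdef : A.Definable L T :=
    (Set.Definable.preimage_comp Sum.inr hs).inter
      (Set.definable_biInter_finset (fun c => Set.Definable.preimage_comp _ (hg c)) Finset.univ)
  have heq : {y : Fin n → N | (fun c => g c y) ∈ s} =
      (fun w : (Fin n ⊕ γ) → N => w ∘ Sum.inl) '' T := by
    ext y
    constructor
    · intro hy
      refine ⟨Sum.elim y (fun c => g c y), ⟨?_, ?_⟩, ?_⟩
      · simpa using hy
      · simp only [Set.mem_iInter]
        intro c _
        simp [Fin.snoc_last, Fin.snoc_castSucc, Function.comp_def]
      · rfl
    · rintro ⟨w, ⟨hws, hwg⟩, rfl⟩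
      simp only [Set.mem_iInter] at hwg
      have hwc : ∀ c : γ, w (Sum.inr c) = g c (w ∘ Sum.inl) := by
        intro c
        have := hwg c (Finset.mem_univ c)
        simpa [Fin.snoc_last, Fin.snoc_castSucc, Function.comp_def] using this
      have : (fun c => g c (w ∘ Sum.inl)) = w ∘ Sum.inr := by
        funext c; exact (hwc c).symm
      simpa [this] using hws
  rw [heq]
  exact Set.Definable.image_comp hTdef Sum.inl

lemma def_eq_pdf {n : ℕ} {f₁ f₂ : (Fin n → N) → N} (h₁ : ParamDefFun L A n f₁)
    (h₂ : ParamDefFun L A n f₂) : A.Definable L {y : Fin n → N | f₁ y = f₂ y} := by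
  have hd : A.Definable L {x : Fin 2 → N | x 0 = x 1} :=
    ⟨Term.equal (Term.var 0) (Term.var 1), by ext x; simp [Formula.realize_equal]⟩
  have h := def_subst hd ![f₁, f₂] ?_
  · have heq : {y : Fin n → N | (fun c => ![f₁, f₂] c y) ∈ {x : Fin 2 → N | x 0 = x 1}} =
        {y : Fin n → N | f₁ y = f₂ y} := by
      ext y; simp
    rwa [heq] at h
  · intro c
    fin_cases c
    · simpa using h₁
    · simpa using h₂

lemma def_eq_const {n : ℕ} {f₁ : (Fin n → N) → N} (h₁ : ParamDefFun L A n f₁) {c : N}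
    (hc : c ∈ A) : A.Definable L {y : Fin n → N | f₁ y = c} :=
  def_eq_pdf h₁ (pdf_const hc n)

lemma def_real {m n : ℕ} (φ : L.Formula (Fin m)) (g : Fin m → (Fin n → N) → N)
    (hg : ∀ c, ParamDefFun L A n (g c)) :
    A.Definable L {y : Fin n → N | φ.Realize (fun c => g c y)} :=
  def_subst ((Set.empty_definable_iff.2 ⟨φ, rfl⟩).mono (Set.empty_subset A)) g hg

lemma exists_factor {n : ℕ} {F : Finset ι} (h : F.card = n) {k : ℕ} (i : Fin k → ι)
    (hi : ∀ r, i r ∈ F) : ∃ p : Fin k → Fin n, ⇑(F.orderEmbOfFin h) ∘ p = i := by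
  have hex : ∀ r, ∃ u, F.orderEmbOfFin h u = i r := by
    intro r
    have hr := hi r
    rw [← Finset.mem_coe, ← Finset.range_orderEmbOfFin F h] at hr
    exact hr
  choose p hp using hex
  exact ⟨p, funext hp⟩

lemma exists_strictMono_fin [Infinite ι] (m : ℕ) : ∃ z : Fin m → ι, StrictMono z := by
  classical
  obtain u : Fin m ↪ ι := (Fin.valEmbedding).trans (Infinite.natEmbedding ι)
  refine ⟨(Finset.univ.image u).orderEmbOfFin ?_, OrderEmbedding.strictMono _⟩
  rw [Finset.card_image_of_injective _ u.injective, Finset.card_univ, Fintype.card_fin]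

lemma transfer {e : ι → N} (hind : OrderIndisc L A e) {n : ℕ} {s : Set (Fin n → N)}
    (hs : A.Definable L s) {i j : Fin n → ι} (hi : StrictMono i) (hj : StrictMono j) :
    e ∘ i ∈ s ↔ e ∘ j ∈ s := by
  obtain ⟨φ, rfl⟩ := hs
  exact hind n φ i j hi hj

lemma mem_genSet_iff {e : ι → N} {T : Set ι} {a : N} :
    a ∈ genSet L A e T ↔ ∃ (k : ℕ) (f : (Fin k → N) → N), ParamDefFun L A k f ∧
      ∃ i : Fin k → ι, StrictMono i ∧ (∀ t, i t ∈ T) ∧ f (e ∘ i) = a := by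
  constructor
  · rintro (h | h)
    · refine ⟨0, fun _ => a, pdf_const h 0, Fin.elim0, ?_, ?_, rfl⟩
      · intro t; exact t.elim0
      · intro t; exact t.elim0
    · exact h
  · intro h; exact Or.inr h

end Aux

/-- for tight indiscernibles, the submodels M_T generated by M ∪ T are
monotone and elementary in one another (Tarski–Vaught condition, realization computed
in M*), and disjoint index sets give intersection exactly M. -/
theorem stmt_14 {L : Language} {N : Type*} [L.Structure N]
    (S : L.ElementarySubstructure N)
    {ι : Type*} [LinearOrder ι] [Infinite ι] (e : ι → N)
    (hinj : Function.Injective e) (hdisj : ∀ x : ι, e x ∉ S)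
    (hskolem : HasDefSkolem L (S : Set N))
    (hind : OrderIndisc L (S : Set N) e)
    (hgen : GeneratedBy L (S : Set N) e)
    (htight : TightProp L (S : Set N) e) :
    (∀ T₀ T₁ : Set ι, T₀ ⊆ T₁ →
      genSet L (S : Set N) e T₀ ⊆ genSet L (S : Set N) e T₁ ∧
      (∀ (m : ℕ) (φ : L.Formula (Fin (m + 1))) (x : Fin m → N),
        (∀ t, x t ∈ genSet L (S : Set N) e T₀) →
        (∃ b ∈ genSet L (S : Set N) e T₁, φ.Realize (Fin.snoc x b)) →
        (∃ b ∈ genSet L (S : Set N) e T₀, φ.Realize (Fin.snoc x b)))) ∧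
    (∀ T₀ T₁ : Set ι, Disjoint T₀ T₁ →
      genSet L (S : Set N) e T₀ ∩ genSet L (S : Set N) e T₁ = (S : Set N)) := by
  classical
  constructor
  · intro T₀ T₁ hsub
    constructor
    · rintro a (h | ⟨k, f, hf, i, hi, hiT, rfl⟩)
      · exact Or.inl h
      · exact Or.inr ⟨k, f, hf, i, hi, fun t => hsub (hiT t), rfl⟩
    · intro m φ x hx hex
      obtain ⟨b, _, hb⟩ := hex
      choose k f hf i hi hiT hfx using fun t => mem_genSet_iff.mp (hx t)
      set F : Finset ι :=
        Finset.univ.biUnion (fun t : Fin m => Finset.image (i t) Finset.univ) with hF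
      set w : Fin F.card → ι := ⇑(F.orderEmbOfFin rfl) with hwdef
      have hwmono : StrictMono w := (F.orderEmbOfFin rfl).strictMono
      have hwT : ∀ u, w u ∈ T₀ := by
        intro u
        have hu : w u ∈ F := F.orderEmbOfFin_mem rfl u
        rw [hF, Finset.mem_biUnion] at hu
        obtain ⟨t, -, hr⟩ := hu
        rw [Finset.mem_image] at hr
        obtain ⟨r, -, hr⟩ := hr
        exact hr ▸ hiT t r
      have hpex : ∀ t, ∃ p : Fin (k t) → Fin F.card, w ∘ p = i t := by
        intro t
        apply exists_factor rfl (i t)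
        intro r
        rw [hF, Finset.mem_biUnion]
        exact ⟨t, Finset.mem_univ t, Finset.mem_image.mpr ⟨r, Finset.mem_univ r, rfl⟩⟩
      choose p hp using hpex
      set G : Fin (m + 1) → (Fin (F.card + 1) → N) → N :=
        Fin.snoc (fun t => fun y => f t (y ∘ fun r => (p t r).castSucc))
          (fun y => y (Fin.last F.card)) with hG
      have hGpdf : ∀ c, ParamDefFun L (S : Set N) (F.card + 1) (G c) := by
        intro c
        refine Fin.lastCases ?_ ?_ c
        · rw [hG, Fin.snoc_last]
          exact pdf_proj _ _
        · intro t
          rw [hG, Fin.snoc_castSucc]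
          exact pdf_reindex (hf t) _
      obtain ⟨χ, hχ⟩ := def_real φ G hGpdf
      obtain ⟨Fk, hFk, hFspec⟩ := hskolem F.card χ
      have hmem : ∀ v : Fin (F.card + 1) → N,
          χ.Realize v ↔ φ.Realize (fun c => G c v) := by
        intro v
        exact (Set.ext_iff.mp hχ v).symm
      have key : ∀ (y : Fin F.card → N) (bb : N),
          (fun c => G c (Fin.snoc y bb)) = Fin.snoc (fun t => f t (fun r => y (p t r))) bb := by
        intro y bb
        funext c
        refine Fin.lastCases ?_ ?_ c
        · rw [hG]
          simp [Fin.snoc_last]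
        · intro t
          rw [hG]
          simp [Fin.snoc_castSucc, Function.comp_def]
      have xeq : (fun t => f t (fun r => (e ∘ w) (p t r))) = x := by
        funext t
        have : (fun r => (e ∘ w) (p t r)) = e ∘ i t := by
          rw [← hp t]; rfl
        rw [this, hfx t]
      have hbx : ∃ bb, χ.Realize (Fin.snoc (e ∘ w) bb) := by
        refine ⟨b, (hmem _).mpr ?_⟩
        rw [key, xeq]
        exact hb
      have hres := hFspec (e ∘ w) hbx
      rw [hmem, key, xeq] at hres
      exact ⟨Fk (e ∘ w), Or.inr ⟨F.card, Fk, hFk, w, hwmono, hwT, rfl⟩, hres⟩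
  · intro T₀ T₁ hT
    ext a
    constructor
    · rintro ⟨h₀, h₁⟩
      obtain ⟨k, f, hf, i, hi, hiT, rfl⟩ := mem_genSet_iff.mp h₀
      obtain ⟨l, g, hg, j, hj, hjT, hga⟩ := mem_genSet_iff.mp h₁
      set F : Finset ι := Finset.image i Finset.univ ∪ Finset.image j Finset.univ with hF
      set n := F.card with hn
      set w : Fin n → ι := ⇑(F.orderEmbOfFin hn.symm) with hwdef
      have hwmono : StrictMono w := (F.orderEmbOfFin hn.symm).strictMono
      obtain ⟨p, hp⟩ := exists_factor hn.symm i (fun r => by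
        rw [hF]
        exact Finset.mem_union_left _ (Finset.mem_image.mpr ⟨r, Finset.mem_univ r, rfl⟩))
      obtain ⟨q, hq⟩ := exists_factor hn.symm j (fun r => by
        rw [hF]
        exact Finset.mem_union_right _ (Finset.mem_image.mpr ⟨r, Finset.mem_univ r, rfl⟩))
      have hpq : ∀ t : Fin n, ¬(∃ r, p r = t) ∨ ¬(∃ r, q r = t) := by
        intro t
        by_contra hcon
        push_neg at hcon
        obtain ⟨⟨r, hr⟩, ⟨r', hr'⟩⟩ := hcon
        have : i r = j r' := by
          rw [← hp, ← hq]
          show w (p r) = w (q r')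
          rw [hr, hr']
        exact Set.disjoint_left.mp hT (hiT r) (this ▸ hjT r')
      obtain ⟨z, hz⟩ := exists_strictMono_fin (ι := ι) (n + n)
      set C : ℕ → Fin n → ι := fun M t =>
        z (if (t : ℕ) < n - M then t.castAdd n else t.addNat n) with hC
      have hCmono : ∀ M, StrictMono (C M) := by
        intro M t t' htt
        apply hz
        have h1 : (t : ℕ) < (t' : ℕ) := htt
        have h2 := t.isLt
        have h3 := t'.isLt
        split_ifs <;>
          (simp only [Fin.lt_def, Fin.coe_castAdd, Fin.coe_addNat]; omega)
      have hs2 : (S : Set N).Definable L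
          {y : Fin n → N | f (y ∘ p) = g (y ∘ q)} :=
        def_eq_pdf (pdf_reindex hf p) (pdf_reindex hg q)
      have hbase : e ∘ w ∈ {y : Fin n → N | f (y ∘ p) = g (y ∘ q)} := by
        show f ((e ∘ w) ∘ p) = g ((e ∘ w) ∘ q)
        have e1 : (e ∘ w) ∘ p = e ∘ i := by rw [← hp]; rfl
        have e2 : (e ∘ w) ∘ q = e ∘ j := by rw [← hq]; rfl
        rw [e1, e2]
        exact hga.symm
      have hallM : ∀ M, f ((e ∘ C M) ∘ p) = g ((e ∘ C M) ∘ q) := by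
        intro M
        exact (transfer hind hs2 (hCmono M) hwmono).mpr hbase
      have hchain : ∀ M, M ≤ n → f ((e ∘ C 0) ∘ p) = f ((e ∘ C M) ∘ p) := by
        intro M
        induction M with
        | zero => intro _; rfl
        | succ M ih =>
          intro hM
          have hMn : M < n := hM
          have hstep : f ((e ∘ C M) ∘ p) = f ((e ∘ C (M + 1)) ∘ p) := by
            have hifeq : ∀ u : Fin n, (u : ℕ) ≠ n - M - 1 → C M u = C (M + 1) u := by
              intro u hu
              have h2 := u.isLt
              rw [hC]
              dsimp only
              by_cases hlt : (u : ℕ) < n - (M + 1)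
              · rw [if_pos (by omega), if_pos hlt]
              · rw [if_neg (by omega), if_neg hlt]
            rcases hpq ⟨n - M - 1, by omega⟩ with hnp | hnq
            · have : (e ∘ C M) ∘ p = (e ∘ C (M + 1)) ∘ p := by
                funext r
                show e (C M (p r)) = e (C (M + 1) (p r))
                rw [hifeq (p r) (fun hcon => hnp ⟨r, Fin.ext hcon⟩)]
              rw [this]
            · have heqq : (e ∘ C M) ∘ q = (e ∘ C (M + 1)) ∘ q := by
                funext r
                show e (C M (q r)) = e (C (M + 1) (q r))
                rw [hifeq (q r) (fun hcon => hnq ⟨r, Fin.ext hcon⟩)]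
              calc f ((e ∘ C M) ∘ p) = g ((e ∘ C M) ∘ q) := hallM M
                _ = g ((e ∘ C (M + 1)) ∘ q) := by rw [heqq]
                _ = f ((e ∘ C (M + 1)) ∘ p) := (hallM (M + 1)).symm
          exact (ih (by omega)).trans hstep
      have hC0 : ∀ t : Fin n, C 0 t = z (t.castAdd n) := by
        intro t
        rw [hC]
        dsimp only
        rw [if_pos (by have := t.isLt; omega)]
      have hCn : ∀ t : Fin n, C n t = z (t.addNat n) := by
        intro t
        rw [hC]
        dsimp only
        rw [if_neg (by omega)]
      have hsep : ∀ a' b' : Fin n, C 0 a' < C n b' := by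
        intro a' b'
        rw [hC0, hCn]
        apply hz
        rw [Fin.lt_def]
        simp only [Fin.coe_castAdd, Fin.coe_addNat]
        have := a'.isLt
        omega
      have htval : (fun y : Fin n → N => f (y ∘ p)) (e ∘ C 0) ∈ (S : Set N) := by
        apply htight n (fun y => f (y ∘ p)) (pdf_reindex hf p) (C 0) (C n)
          (hCmono 0) (hCmono n) hsep
        exact hchain n le_rfl
      have hs3 : (S : Set N).Definable L
          {y : Fin n → N | f (y ∘ p) = f ((e ∘ C 0) ∘ p)} :=
        def_eq_const (pdf_reindex hf p) htval
      have hfin : f ((e ∘ w) ∘ p) = f ((e ∘ C 0) ∘ p) :=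
        (transfer hind hs3 hwmono (hCmono 0)).mpr rfl
      have e1 : (e ∘ w) ∘ p = e ∘ i := by rw [← hp]; rfl
      rw [e1] at hfin
      rw [hfin]
      exact htval
    · intro h
      exact ⟨Or.inl h, Or.inl h⟩
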